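/- Fix δ ∈ (0,1) and an integer n ≥ 2, and for each k ∈ {0,1,…,n−1} let h_k be as follows: h_k(x) = σ((k/δ)(x−k+δ)) − σ((k/δ)(x−k)) + σ((k/δ)(−x+k+1)) − σ((k/δ)(−x+k+1−δ)) − k. Then for every k ∈ {0,1,…,n−1} and every x ∈ [k, k+1−δ], the sum ∑_{i=0}^{n−1} h_i(x) equals ⌊x⌋ = k. -/
import Mathlib


/-- The ReLU function. -/
noncomputable def relu (t : ℝ) : ℝ := max 0 t

/-- The piecewise "bump" function `h_k` from the paper. -/
noncomputable def hk (δ : ℝ) (k : ℕ) (x : ℝ) : ℝ :=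
  relu ((k / δ) * (x - k + δ)) - relu ((k / δ) * (x - k))
    + relu ((k / δ) * (-x + k + 1)) - relu ((k / δ) * (-x + k + 1 - δ)) - k

theorem stmt_9 (δ : ℝ) (hδ : δ ∈ Set.Ioo (0 : ℝ) 1) (n : ℕ) (hn : 2 ≤ n)
    (k : ℕ) (hk' : k < n) :
    ∀ x ∈ Set.Icc (k : ℝ) (k + 1 - δ),
      (∑ i ∈ Finset.range n, hk δ i x) = k ∧ ⌊x⌋ = (k : ℤ) := by
  obtain ⟨hδ0, hδ1⟩ := hδ
  intro x hx
  obtain ⟨hx1, hx2⟩ := hx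
  have hδ0' : δ ≠ 0 := ne_of_gt hδ0
  constructor
  · have key : ∀ i ∈ Finset.range n, hk δ i x = if i = k then (k : ℝ) else 0 := by
      intro i _
      unfold hk relu
      have hnn : (0 : ℝ) ≤ (i : ℝ) / δ := div_nonneg (Nat.cast_nonneg i) hδ0.le
      rcases lt_trichotomy i k with h | h | h
      · have hik : (i : ℝ) + 1 ≤ k := by exact_mod_cast h
        rw [if_neg (Nat.ne_of_lt h)]
        rw [max_eq_right (mul_nonneg hnn (by linarith)),
            max_eq_right (mul_nonneg hnn (by linarith)),
            max_eq_left (mul_nonpos_of_nonneg_of_nonpos hnn (by linarith)),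
            max_eq_left (mul_nonpos_of_nonneg_of_nonpos hnn (by linarith))]
        field_simp
        ring
      · subst h
        rw [if_pos rfl]
        rw [max_eq_right (mul_nonneg hnn (by linarith)),
            max_eq_right (mul_nonneg hnn (by linarith)),
            max_eq_right (mul_nonneg hnn (by linarith)),
            max_eq_right (mul_nonneg hnn (by linarith))]
        field_simp
        ring
      · have hik : (k : ℝ) + 1 ≤ i := by exact_mod_cast h
        rw [if_neg (Nat.ne_of_gt h)]
        rw [max_eq_left (mul_nonpos_of_nonneg_of_nonpos hnn (by linarith)),
            max_eq_left (mul_nonpos_of_nonneg_of_nonpos hnn (by linarith)),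
            max_eq_right (mul_nonneg hnn (by linarith)),
            max_eq_right (mul_nonneg hnn (by linarith))]
        field_simp
        ring
    rw [Finset.sum_congr rfl key, Finset.sum_ite_eq' (Finset.range n) k,
        if_pos (Finset.mem_range.mpr hk')]
  · exact Int.floor_eq_iff.mpr ⟨by push_cast; linarith, by push_cast; linarith⟩
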